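/- Let h ≥ 1 and let m_1,…,m_h, n_1,…,n_h be positive integers. The graph NSG(m_1,…,m_h; n_1,…,n_h) is anti-regular if and only if n_1 = ⋯ = n_h = 1, m_1 = ⋯ = m_{h−1} = 1, and m_h ∈ {1, 2}. -/

import Mathlib

/-- The nested split graph `NSG(m₁,…,m_h; n₁,…,n_h)`: the vertex set is the disjoint union
of `U₁,…,U_h, V₁,…,V_h` with `|Uᵢ| = mᵢ`, `|Vᵢ| = nᵢ`; the `Vᵢ`'s form a clique,
the `Uᵢ`'s form an independent set, and a vertex of `Uᵢ` is adjacent to a vertex of `Vⱼ`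
iff `j ≤ i`. -/
def NSG (h : ℕ) (m n : Fin h → ℕ) :
    SimpleGraph ((Σ i : Fin h, Fin (m i)) ⊕ (Σ i : Fin h, Fin (n i))) where
  Adj x y :=
    match x, y with
    | Sum.inl _, Sum.inl _ => False
    | Sum.inl ⟨i, _⟩, Sum.inr ⟨j, _⟩ => j ≤ i
    | Sum.inr ⟨j, _⟩, Sum.inl ⟨i, _⟩ => j ≤ i
    | Sum.inr a, Sum.inr b => a ≠ b
  symm := by
    constructor
    rintro (⟨i, a⟩ | ⟨i, a⟩) (⟨j, b⟩ | ⟨j, b⟩) hadj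
    · exact hadj
    · exact hadj
    · exact hadj
    · exact Ne.symm hadj
  loopless := by
    constructor
    rintro (⟨i, a⟩ | ⟨i, a⟩) hadj
    · exact hadj
    · exact hadj rfl

/-- A graph on at least two vertices is anti-regular if exactly one unordered pair
of distinct vertices has equal degrees. -/
def SimpleGraph.IsAntiRegular {V : Type*} [Fintype V] (G : SimpleGraph V) : Prop :=
  letI := Classical.decEq V
  letI : DecidableRel G.Adj := Classical.decRel _
  2 ≤ Fintype.card V ∧ ∃ u v : V, u ≠ v ∧ G.degree u = G.degree v ∧
    ∀ a b : V, a ≠ b → G.degree a = G.degree b → ({a, b} : Set V) = {u, v}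

lemma degU_aux (h : ℕ) (m n : Fin h → ℕ) [inst : DecidableRel (NSG h m n).Adj]
    (i : Fin h) (a : Fin (m i)) :
    (NSG h m n).degree (Sum.inl ⟨i, a⟩) = ∑ j, if j ≤ i then n j else 0 := by
  rw [SimpleGraph.degree, SimpleGraph.neighborFinset_eq_filter, Finset.card_filter,
    Fintype.sum_sum_type]
  have h1 : ∑ x : (Σ i : Fin h, Fin (m i)),
      (if (NSG h m n).Adj (Sum.inl ⟨i, a⟩) (Sum.inl x) then 1 else 0) = 0 := by
    apply Finset.sum_eq_zero
    rintro ⟨j, b⟩ _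
    simp [NSG]
  rw [h1, zero_add, ← Finset.univ_sigma_univ, Finset.sum_sigma]
  refine Finset.sum_congr rfl fun j _ => ?_
  have : ∀ b : Fin (n j), (if (NSG h m n).Adj (Sum.inl ⟨i, a⟩) (Sum.inr ⟨j, b⟩) then 1 else 0)
      = if j ≤ i then 1 else 0 := by
    intro b
    by_cases hji : j ≤ i <;> simp [NSG, hji]
  simp only [this, Finset.sum_const, Finset.card_univ, Fintype.card_fin, smul_eq_mul]
  split <;> simp

lemma degV_aux (h : ℕ) (m n : Fin h → ℕ) [inst : DecidableRel (NSG h m n).Adj]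
    (j : Fin h) (b : Fin (n j)) :
    (NSG h m n).degree (Sum.inr ⟨j, b⟩) =
      (∑ i, if j ≤ i then m i else 0) + ((∑ k, n k) - 1) := by
  rw [SimpleGraph.degree, SimpleGraph.neighborFinset_eq_filter, Finset.card_filter,
    Fintype.sum_sum_type]
  have h1 : ∑ x : (Σ i : Fin h, Fin (m i)),
      (if (NSG h m n).Adj (Sum.inr ⟨j, b⟩) (Sum.inl x) then 1 else 0)
      = ∑ i, if j ≤ i then m i else 0 := by
    rw [← Finset.univ_sigma_univ, Finset.sum_sigma]
    refine Finset.sum_congr rfl fun i _ => ?_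
    have : ∀ a : Fin (m i), (if (NSG h m n).Adj (Sum.inr ⟨j, b⟩) (Sum.inl ⟨i, a⟩) then 1 else 0)
        = if j ≤ i then 1 else 0 := by
      intro a
      by_cases hji : j ≤ i <;> simp [NSG, hji]
    simp only [this, Finset.sum_const, Finset.card_univ, Fintype.card_fin, smul_eq_mul]
    split <;> simp
  have h2 : ∑ x : (Σ k : Fin h, Fin (n k)),
      (if (NSG h m n).Adj (Sum.inr ⟨j, b⟩) (Sum.inr x) then 1 else 0)
      = (∑ k, n k) - 1 := by
    have : ∀ x : (Σ k : Fin h, Fin (n k)),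
        (if (NSG h m n).Adj (Sum.inr ⟨j, b⟩) (Sum.inr x) then 1 else 0)
        = if x = ⟨j, b⟩ then 0 else 1 := by
      rintro ⟨k, c⟩
      by_cases hx : (⟨k, c⟩ : Σ k : Fin h, Fin (n k)) = ⟨j, b⟩
      · simp [NSG, hx]
      · simp only [hx, if_false]
        rw [if_pos]
        show (⟨j,b⟩ : Σ k : Fin h, Fin (n k)) ≠ ⟨k, c⟩
        exact Ne.symm hx
    simp only [this]
    have e1 : (∑ x : (k : Fin h) × Fin (n k), if x = ⟨j, b⟩ then 0 else 1)
        = ∑ x ∈ Finset.univ.filter (· ≠ (⟨j, b⟩ : (k : Fin h) × Fin (n k))), 1 := by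
      rw [Finset.sum_filter]
      refine Finset.sum_congr rfl fun x _ => ?_
      by_cases hx : x = ⟨j, b⟩ <;> simp [hx]
    rw [e1, Finset.sum_const, smul_eq_mul, mul_one, Finset.filter_ne',
      Finset.card_erase_of_mem (Finset.mem_univ _), Finset.card_univ, Fintype.card_sigma]
    simp
  rw [h1, h2]

lemma degU (h : ℕ) (m n : Fin h → ℕ) (i : Fin h) (a : Fin (m i))
    [F : Fintype ((NSG h m n).neighborSet (Sum.inl ⟨i, a⟩))] :
    (NSG h m n).degree (Sum.inl ⟨i, a⟩) = ∑ j, if j ≤ i then n j else 0 := by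
  letI : DecidableEq ((Σ i : Fin h, Fin (m i)) ⊕ (Σ i : Fin h, Fin (n i))) := Classical.decEq _
  letI inst : DecidableRel (NSG h m n).Adj := Classical.decRel _
  rw [Subsingleton.elim F (SimpleGraph.neighborSetFintype (NSG h m n) _)]
  exact degU_aux h m n i a

lemma degV (h : ℕ) (m n : Fin h → ℕ) (j : Fin h) (b : Fin (n j))
    [F : Fintype ((NSG h m n).neighborSet (Sum.inr ⟨j, b⟩))] :
    (NSG h m n).degree (Sum.inr ⟨j, b⟩) =
      (∑ i, if j ≤ i then m i else 0) + ((∑ k, n k) - 1) := by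
  letI : DecidableEq ((Σ i : Fin h, Fin (m i)) ⊕ (Σ i : Fin h, Fin (n i))) := Classical.decEq _
  letI inst : DecidableRel (NSG h m n).Adj := Classical.decRel _
  rw [Subsingleton.elim F (SimpleGraph.neighborSetFintype (NSG h m n) _)]
  exact degV_aux h m n j b
lemma last_lt (h : ℕ) (hh : 1 ≤ h) : h - 1 < h := by omega
section
variable {h : ℕ} {n : Fin h → ℕ}

lemma sum_ite_le (i : Fin h) : (∑ j, if j ≤ i then n j else 0) ≤ ∑ j, n j :=
  Finset.sum_le_sum fun j _ => by split <;> simp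

lemma sum_ite_lt (hn : ∀ j, 1 ≤ n j) {i i' : Fin h} (hii : i < i') :
    (∑ j, if j ≤ i then n j else 0) < ∑ j, if j ≤ i' then n j else 0 := by
  rw [← Finset.sum_filter, ← Finset.sum_filter]
  refine Finset.sum_lt_sum_of_subset ?_ (i := i') ?_ ?_ (hn i') (fun _ _ _ => Nat.zero_le _)
  · intro j hj
    simp only [Finset.mem_filter, Finset.mem_univ, true_and] at *
    exact le_trans hj (le_of_lt hii)
  · simp
  · simp
    exact hii

lemma sum_ite_last (hh : 1 ≤ h) :
    (∑ j, if j ≤ (⟨h - 1, last_lt h hh⟩ : Fin h) then n j else 0) = ∑ j, n j := by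
  refine Finset.sum_congr rfl fun j _ => if_pos ?_
  show (j : ℕ) ≤ h - 1
  have := j.isLt
  omega

lemma sum_ite_ge_last (hh : 1 ≤ h) (j : Fin h) :
    n ⟨h - 1, last_lt h hh⟩ ≤ ∑ i, if j ≤ i then n i else 0 := by
  rw [← Finset.sum_filter]
  refine Finset.single_le_sum (f := n) (fun _ _ => Nat.zero_le _) ?_
  simp
  show (j : ℕ) ≤ h - 1
  have := j.isLt
  omega

lemma sum_ite_anti (hn : ∀ j, 1 ≤ n j) {j j' : Fin h} (hjj : j < j') :
    (∑ i, if j' ≤ i then n i else 0) < ∑ i, if j ≤ i then n i else 0 := by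
  rw [← Finset.sum_filter, ← Finset.sum_filter]
  refine Finset.sum_lt_sum_of_subset ?_ (i := j) ?_ ?_ (hn j) (fun _ _ _ => Nat.zero_le _)
  · intro i hi
    simp only [Finset.mem_filter, Finset.mem_univ, true_and] at *
    exact le_trans (le_of_lt hjj) hi
  · simp
  · simp
    exact hjj

lemma sum_ite_last_eq (hh : 1 ≤ h) :
    (∑ i, if (⟨h - 1, last_lt h hh⟩ : Fin h) ≤ i then n i else 0) = n ⟨h - 1, last_lt h hh⟩ := by
  rw [← Finset.sum_filter]
  have : Finset.univ.filter (fun i => (⟨h - 1, last_lt h hh⟩ : Fin h) ≤ i) = {⟨h - 1, last_lt h hh⟩} := by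
    ext i
    simp [Fin.le_def, Fin.ext_iff]
    have := i.isLt
    omega
  rw [this, Finset.sum_singleton]

lemma one_le_sum (hh : 1 ≤ h) (hn : ∀ j, 1 ≤ n j) : 1 ≤ ∑ j, n j := by
  calc 1 ≤ n ⟨h-1, last_lt h hh⟩ := hn _
  _ ≤ ∑ j, n j := Finset.single_le_sum (fun _ _ => Nat.zero_le _) (Finset.mem_univ _)

lemma pair_eq_aux {V : Type*} {a b c d : V} (hset : ({a, b} : Set V) = {c, d})
    (hac : a ≠ c) (hbc : b ≠ c) : a = b := by
  have ha : a ∈ ({c, d} : Set V) := hset ▸ (by simp)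
  have hb : b ∈ ({c, d} : Set V) := hset ▸ (by simp)
  simp only [Set.mem_insert_iff, Set.mem_singleton_iff] at ha hb
  rcases ha with h1 | h1 <;> rcases hb with h2 | h2 <;> first | (exact absurd h1 hac) | (exact absurd h2 hbc) | (rw [h1, h2])

end

theorem nsg_antiRegular_iff (h : ℕ) (hh : 1 ≤ h) (m n : Fin h → ℕ)
    (hm : ∀ i, 1 ≤ m i) (hn : ∀ i, 1 ≤ n i) :
    (NSG h m n).IsAntiRegular ↔
      ((∀ i, n i = 1) ∧ (∀ i : Fin h, (i : ℕ) < h - 1 → m i = 1) ∧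
        (m ⟨h - 1, by omega⟩ = 1 ∨ m ⟨h - 1, by omega⟩ = 2)) := by
  classical
  have hN : 1 ≤ ∑ k, n k := one_le_sum hh hn
  have hM : 1 ≤ ∑ k, m k := one_le_sum hh hm
  set last : Fin h := ⟨h - 1, by omega⟩ with hlastdef
  have hlastle : ∀ i : Fin h, i ≤ last := fun i => by
    show (i : ℕ) ≤ h - 1
    have := i.isLt
    omega
  have hSUlt : ∀ i : Fin h, i ≠ last → (∑ j, if j ≤ i then n j else 0) < ∑ k, n k := by
    intro i hi
    calc (∑ j, if j ≤ i then n j else 0)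
        < ∑ j, if j ≤ last then n j else 0 := sum_ite_lt hn (lt_of_le_of_ne (hlastle i) hi)
      _ = ∑ k, n k := sum_ite_last hh
  have hSUinj : ∀ i i' : Fin h,
      (∑ j, if j ≤ i then n j else 0) = (∑ j, if j ≤ i' then n j else 0) → i = i' := by
    intro i i' hd
    by_contra hne'
    rcases lt_or_gt_of_ne hne' with hlt | hlt
    · exact absurd hd (Nat.ne_of_lt (sum_ite_lt hn hlt))
    · exact absurd hd.symm (Nat.ne_of_lt (sum_ite_lt hn hlt))
  have hTinj : ∀ j j' : Fin h,
      (∑ i, if j ≤ i then m i else 0) = (∑ i, if j' ≤ i then m i else 0) → j = j' := by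
    intro j j' hd
    by_contra hne'
    rcases lt_or_gt_of_ne hne' with hlt | hlt
    · exact absurd hd.symm (Nat.ne_of_lt (sum_ite_anti hm hlt))
    · exact absurd hd (Nat.ne_of_lt (sum_ite_anti hm hlt))
  have hT2 : ∀ j : Fin h, j ≠ last → 2 ≤ ∑ i, if j ≤ i then m i else 0 := by
    intro j hj
    have h1 := sum_ite_anti hm (lt_of_le_of_ne (hlastle j) hj)
    have h2 : (∑ i, if last ≤ i then m i else 0) = m last := sum_ite_last_eq hh
    have := hm last
    omega
  have hTgem : ∀ j : Fin h, m last ≤ ∑ i, if j ≤ i then m i else 0 :=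
    fun j => sum_ite_ge_last hh j
  constructor
  · rintro ⟨-, u, v, huv, -, huniq⟩
    have hml12 : m last = 1 ∨ 2 ≤ m last := by have := hm last; omega
    -- a second equal-degree pair avoiding a given "inr-type" obstruction
    have hn1 : ∀ j, n j = 1 := by
      intro j
      by_contra hnj
      have hnj2 : 2 ≤ n j := by have := hn j; omega
      have hx12 : (Sum.inr ⟨j, (⟨0, by omega⟩ : Fin (n j))⟩ :
          (Σ i : Fin h, Fin (m i)) ⊕ (Σ i : Fin h, Fin (n i)))
          ≠ Sum.inr ⟨j, ⟨1, by omega⟩⟩ := by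
        simp [Fin.ext_iff]
      have hset1 := huniq _ _ hx12 (by rw [degV, degV])
      rcases hml12 with hml | hml
      · have hy12 : (Sum.inl ⟨last, (⟨0, by omega⟩ : Fin (m last))⟩ :
            (Σ i : Fin h, Fin (m i)) ⊕ (Σ i : Fin h, Fin (n i)))
            ≠ Sum.inr ⟨last, ⟨0, by have := hn last; omega⟩⟩ := by simp
        have hset2 := huniq _ _ hy12 (by
          rw [degU, degV, sum_ite_last hh, sum_ite_last_eq hh, hml]
          omega)
        exact hx12 (pair_eq_aux (hset1.trans hset2.symm) (by simp) (by simp))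
      · have hy12 : (Sum.inl ⟨last, (⟨0, by omega⟩ : Fin (m last))⟩ :
            (Σ i : Fin h, Fin (m i)) ⊕ (Σ i : Fin h, Fin (n i)))
            ≠ Sum.inl ⟨last, ⟨1, by omega⟩⟩ := by simp [Fin.ext_iff]
        have hset2 := huniq _ _ hy12 (by rw [degU, degU])
        exact hx12 (pair_eq_aux (hset1.trans hset2.symm) (by simp) (by simp))
    have hm1 : ∀ i : Fin h, (i : ℕ) < h - 1 → m i = 1 := by
      intro i hi
      by_contra hmi
      have hmi2 : 2 ≤ m i := by have := hm i; omega
      have hine : i ≠ last := by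
        intro he
        have hv := congrArg Fin.val he
        simp only [hlastdef] at hv
        omega
      have hx12 : (Sum.inl ⟨i, (⟨0, by omega⟩ : Fin (m i))⟩ :
          (Σ i : Fin h, Fin (m i)) ⊕ (Σ i : Fin h, Fin (n i)))
          ≠ Sum.inl ⟨i, ⟨1, by omega⟩⟩ := by
        simp [Fin.ext_iff]
      have hset1 := huniq _ _ hx12 (by rw [degU, degU])
      rcases hml12 with hml | hml
      · have hy12 : (Sum.inr ⟨last, (⟨0, by have := hn last; omega⟩ : Fin (n last))⟩ :
            (Σ i : Fin h, Fin (m i)) ⊕ (Σ i : Fin h, Fin (n i)))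
            ≠ Sum.inl ⟨last, ⟨0, by omega⟩⟩ := by simp
        have hset2 := huniq _ _ hy12 (by
          rw [degU, degV, sum_ite_last hh, sum_ite_last_eq hh, hml]
          omega)
        exact hx12 (pair_eq_aux (hset1.trans hset2.symm) (by simp) (by simp))
      · have hy12 : (Sum.inl ⟨last, (⟨0, by omega⟩ : Fin (m last))⟩ :
            (Σ i : Fin h, Fin (m i)) ⊕ (Σ i : Fin h, Fin (n i)))
            ≠ Sum.inl ⟨last, ⟨1, by omega⟩⟩ := by simp [Fin.ext_iff]
        have hset2 := huniq _ _ hy12 (by rw [degU, degU])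
        refine hx12 (pair_eq_aux (hset1.trans hset2.symm) ?_ ?_) <;>
          simp [Fin.ext_iff] <;> intro he <;> exact absurd he (by simpa [hlastdef, Fin.ext_iff] using hine)
    have hml2 : m last ≤ 2 := by
      by_contra hml3
      have hml3' : 3 ≤ m last := by omega
      have hx01 : (Sum.inl ⟨last, (⟨1, by omega⟩ : Fin (m last))⟩ :
          (Σ i : Fin h, Fin (m i)) ⊕ (Σ i : Fin h, Fin (n i)))
          ≠ Sum.inl ⟨last, ⟨0, by omega⟩⟩ := by simp [Fin.ext_iff]
      have hx02 : (Sum.inl ⟨last, (⟨2, by omega⟩ : Fin (m last))⟩ :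
          (Σ i : Fin h, Fin (m i)) ⊕ (Σ i : Fin h, Fin (n i)))
          ≠ Sum.inl ⟨last, ⟨0, by omega⟩⟩ := by simp [Fin.ext_iff]
      have hset1 := huniq _ _ hx01 (by rw [degU, degU])
      have hset2 := huniq _ _ hx02 (by rw [degU, degU])
      have := pair_eq_aux (hset1.trans hset2.symm) (by simp [Fin.ext_iff]) (by simp [Fin.ext_iff])
      simp [Fin.ext_iff] at this
    refine ⟨hn1, hm1, ?_⟩
    show m last = 1 ∨ m last = 2
    have := hm last
    omega
  · rintro ⟨hn1, hm1, hmlast⟩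
    have hmlt : ∀ i : Fin h, i ≠ last → m i = 1 := by
      intro i hi
      apply hm1
      have h1 := i.isLt
      have h2 : (i : ℕ) ≠ h - 1 := fun he => hi (by simp [hlastdef, Fin.ext_iff, he])
      omega
    have hcard : 2 ≤ Fintype.card ((Σ i : Fin h, Fin (m i)) ⊕ (Σ i : Fin h, Fin (n i))) := by
      rw [Fintype.card_sum, Fintype.card_sigma, Fintype.card_sigma]
      simp only [Fintype.card_fin]
      omega
    have hmll : m last = 1 ∨ m last = 2 := hmlast
    rcases hmll with hml | hml
    · refine ⟨hcard, Sum.inl ⟨last, ⟨0, by omega⟩⟩, Sum.inr ⟨last, ⟨0, by have := hn last; omega⟩⟩,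
        by simp, by rw [degU, degV, sum_ite_last hh, sum_ite_last_eq hh, hml]; omega, ?_⟩
      rintro (⟨i, x⟩ | ⟨j, y⟩) (⟨i', x'⟩ | ⟨j', y'⟩) hab hdab
      · rw [degU, degU] at hdab
        obtain rfl := hSUinj _ _ hdab
        have hmi : m i = 1 := by
          by_cases hi : i = last
          · rw [hi, hml]
          · exact hmlt i hi
        have hx : x = x' := by
          apply Fin.ext
          have h1 := x.isLt
          have h2 := x'.isLt
          omega
        exact absurd (by rw [hx]) hab
      · rw [degU, degV] at hdab
        have hS := sum_ite_le (n := n) i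
        have hj' : j' = last := by
          by_contra hj
          have := hT2 j' hj
          omega
        have hi : i = last := by
          by_contra hi
          have hlt := hSUlt i hi
          have := hTgem j'
          have := hm last
          omega
        subst hi hj'
        have hx : x = ⟨0, by omega⟩ := by
          apply Fin.ext
          have := x.isLt
          omega
        have hy : y' = ⟨0, by have := hn last; omega⟩ := by
          apply Fin.ext
          have h1 := y'.isLt
          have h2 := hn1 last
          omega
        rw [hx, hy]
      · rw [degV, degU] at hdab
        have hS := sum_ite_le (n := n) i'
        have hj : j = last := by
          by_contra hj
          have := hT2 j hj
          omega
        have hi : i' = last := by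
          by_contra hi
          have hlt := hSUlt i' hi
          have := hTgem j
          have := hm last
          omega
        subst hi hj
        have hx : x' = ⟨0, by omega⟩ := by
          apply Fin.ext
          have := x'.isLt
          omega
        have hy : y = ⟨0, by have := hn last; omega⟩ := by
          apply Fin.ext
          have h1 := y.isLt
          have h2 := hn1 last
          omega
        rw [hx, hy]
        exact Set.pair_comm _ _
      · rw [degV, degV] at hdab
        have hjj : j = j' := hTinj _ _ (by omega)
        subst hjj
        have hy : y = y' := by
          apply Fin.ext
          have h1 := y.isLt
          have h2 := y'.isLt
          have h3 := hn1 j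
          omega
        exact absurd (by rw [hy]) hab
    · refine ⟨hcard, Sum.inl ⟨last, ⟨0, by omega⟩⟩, Sum.inl ⟨last, ⟨1, by omega⟩⟩,
        by simp [Fin.ext_iff], by rw [degU, degU], ?_⟩
      rintro (⟨i, x⟩ | ⟨j, y⟩) (⟨i', x'⟩ | ⟨j', y'⟩) hab hdab
      · rw [degU, degU] at hdab
        obtain rfl := hSUinj _ _ hdab
        by_cases hi : i = last
        · subst hi
          have hxx : x ≠ x' := by
            intro he
            exact hab (by rw [he])
          have h1 := x.isLt
          have h2 := x'.isLt
          have hcases : (x : ℕ) = 0 ∧ (x' : ℕ) = 1 ∨ (x : ℕ) = 1 ∧ (x' : ℕ) = 0 := by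
            have : (x : ℕ) ≠ (x' : ℕ) := fun he => hxx (Fin.ext he)
            omega
          rcases hcases with ⟨hx0, hx1⟩ | ⟨hx0, hx1⟩
          · rw [show x = ⟨0, by omega⟩ from Fin.ext hx0, show x' = ⟨1, by omega⟩ from Fin.ext hx1]
          · rw [show x = ⟨1, by omega⟩ from Fin.ext hx0, show x' = ⟨0, by omega⟩ from Fin.ext hx1]
            exact Set.pair_comm _ _
        · have hmi : m i = 1 := hmlt i hi
          have hx : x = x' := by
            apply Fin.ext
            have h1 := x.isLt
            have h2 := x'.isLt
            omega
          exact absurd (by rw [hx]) hab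
      · exfalso
        rw [degU, degV] at hdab
        have hS := sum_ite_le (n := n) i
        have := hTgem j'
        omega
      · exfalso
        rw [degV, degU] at hdab
        have hS := sum_ite_le (n := n) i'
        have := hTgem j
        omega
      · rw [degV, degV] at hdab
        have hjj : j = j' := hTinj _ _ (by omega)
        subst hjj
        have hy : y = y' := by
          apply Fin.ext
          have h1 := y.isLt
          have h2 := y'.isLt
          have h3 := hn1 j
          omega
        exact absurd (by rw [hy]) hab
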